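/- Let v, v' ∈ {−1,1}^4 and for s = 1,…,4 let u_s = I if v_s = 1 and u_s = σ_x if v_s = −1, and likewise u'_s from v'_s. Then (1/4) ∑_{s=1}^{4} (u_s ⊗ u'_s)(σ_z ⊗ σ_z)(u_s ⊗ u'_s)† = (⟨v,v'⟩/4) (σ_z ⊗ σ_z), where ⟨v,v'⟩ = ∑_{s=1}^{4} v_s v'_s. That is, applying the pulse sequences v and v' at two adjacent lattice points changes the average coupling σ_z ⊗ σ_z to (⟨v,v'⟩/4) σ_z ⊗ σ_z. -/
import Mathlib


open Matrix Kronecker Finset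

/-- The Pauli matrix `σ_x`. -/
def σx : Matrix (Fin 2) (Fin 2) ℂ := !![0, 1; 1, 0]

/-- The Pauli matrix `σ_z`. -/
def σz : Matrix (Fin 2) (Fin 2) ℂ := !![1, 0; 0, -1]

lemma kron_conjT (A B : Matrix (Fin 2) (Fin 2) ℂ) :
    (A ⊗ₖ B)ᴴ = Aᴴ ⊗ₖ Bᴴ := by
  ext i j
  simp [Matrix.kroneckerMap_apply, Matrix.conjTranspose_apply]

lemma sx_conjT : σxᴴ = σx := by
  ext i j
  fin_cases i <;> fin_cases j <;> simp [σx]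

lemma sx_sz_sx : σx * σz * σx = -σz := by
  ext i j
  fin_cases i <;> fin_cases j <;>
    simp [σx, σz, Matrix.mul_apply, Fin.sum_univ_two]

lemma term_eq (a b : ℝ) (ha : a = -1 ∨ a = 1) (hb : b = -1 ∨ b = 1)
    (U U' : Matrix (Fin 2) (Fin 2) ℂ)
    (hU : U = if a = 1 then 1 else σx) (hU' : U' = if b = 1 then 1 else σx) :
    (U ⊗ₖ U') * (σz ⊗ₖ σz) * (U ⊗ₖ U')ᴴ = ((a * b : ℝ) : ℂ) • (σz ⊗ₖ σz) := by
  rw [kron_conjT, ← Matrix.mul_kronecker_mul, ← Matrix.mul_kronecker_mul]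
  rcases ha with ha | ha <;> rcases hb with hb | hb <;>
    subst ha <;> subst hb <;>
    simp only [hU, hU', if_pos rfl, if_neg (by norm_num : (-1 : ℝ) ≠ 1),
      Matrix.conjTranspose_one, sx_conjT, Matrix.one_mul, Matrix.mul_one,
      sx_sz_sx] <;>
    (ext i j; simp [Matrix.kroneckerMap_apply, Matrix.neg_apply, Matrix.smul_apply]; try ring)

/-- Applying the pulse sequences `v` and `v'` (entries in `{−1,1}`, where `−1`
means conjugation by `σ_x` and `1` means doing nothing) at two adjacent
lattice points changes the average coupling `σ_z ⊗ σ_z` into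
`(⟨v,v'⟩/4) σ_z ⊗ σ_z`. -/
theorem average_coupling_eq_inner_smul (v v' : Fin 4 → ℝ)
    (hv : ∀ s, v s = -1 ∨ v s = 1) (hv' : ∀ s, v' s = -1 ∨ v' s = 1)
    (u u' : Fin 4 → Matrix (Fin 2) (Fin 2) ℂ)
    (hu : ∀ s, u s = if v s = 1 then 1 else σx)
    (hu' : ∀ s, u' s = if v' s = 1 then 1 else σx) :
    (1 / 4 : ℂ) • ∑ s : Fin 4,
        (u s ⊗ₖ u' s) * (σz ⊗ₖ σz) * (u s ⊗ₖ u' s)ᴴ =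
      (((∑ s : Fin 4, v s * v' s) / 4 : ℝ) : ℂ) • (σz ⊗ₖ σz) := by
  have h : ∀ s : Fin 4,
      (u s ⊗ₖ u' s) * (σz ⊗ₖ σz) * (u s ⊗ₖ u' s)ᴴ
        = ((v s * v' s : ℝ) : ℂ) • (σz ⊗ₖ σz) :=
    fun s => term_eq _ _ (hv s) (hv' s) _ _ (hu s) (hu' s)
  simp only [h, ← Finset.sum_smul, smul_smul]
  congr 1
  push_cast
  ring
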